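/- Let η > 0, r > 0, f ≥ 0 be real numbers and w ∈ ℂ with w ≠ 0. Define ρ = ( r·|w| + √( r²·|w|² + 4·η·(η+r)·f ) ) / ( 2·(η+r) ) and ẑ = ρ·(w/|w|). Then for every z ∈ ℂ with z ≠ 0, (η/2)·( |ẑ|² − f·log(|ẑ|²) ) + (r/2)·|ẑ − w|² ≤ (η/2)·( |z|² − f·log(|z|²) ) + (r/2)·|z − w|². In particular ẑ is a global minimizer over ℂ \ {0} of z ↦ (η/2)·( |z|² − f·log(|z|²) ) + (r/2)·|z − w|². -/

import Mathlib

set_option maxHeartbeats 1000000 in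
/-- Closed-form solution, per coordinate, of the `z`-subproblem
`min_z (η/2)(|z|² − f·log|z|²) + (r/2)|z − w|²` arising in the ADMM for Poisson
phase retrieval. -/
theorem poisson_prox_closed_form (η r f : ℝ) (hη : 0 < η) (hr : 0 < r) (hf : 0 ≤ f)
    (w : ℂ) (hw : w ≠ 0) :
    ∀ z : ℂ, z ≠ 0 →
      (η / 2) * (‖(((((r * ‖w‖ +
            Real.sqrt (r ^ 2 * ‖w‖ ^ 2 + 4 * η * (η + r) * f)) /
              (2 * (η + r)) : ℝ) : ℂ)) * (w / (‖w‖ : ℂ)))‖ ^ 2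
          - f * Real.log (‖(((((r * ‖w‖ +
              Real.sqrt (r ^ 2 * ‖w‖ ^ 2 + 4 * η * (η + r) * f)) /
                (2 * (η + r)) : ℝ) : ℂ)) * (w / (‖w‖ : ℂ)))‖ ^ 2))
        + (r / 2) * ‖((((((r * ‖w‖ +
            Real.sqrt (r ^ 2 * ‖w‖ ^ 2 + 4 * η * (η + r) * f)) /
              (2 * (η + r)) : ℝ) : ℂ)) * (w / (‖w‖ : ℂ))) - w)‖ ^ 2 ≤
      (η / 2) * (‖z‖ ^ 2 - f * Real.log (‖z‖ ^ 2))
        + (r / 2) * ‖(z - w)‖ ^ 2 := by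
  intro z hz
  have ha0 : 0 < ‖w‖ := norm_pos_iff.mpr hw
  set a := ‖w‖ with ha
  set S := Real.sqrt (r ^ 2 * a ^ 2 + 4 * η * (η + r) * f) with hS
  have hS0 : 0 ≤ S := Real.sqrt_nonneg _
  have hSsq : S ^ 2 = r ^ 2 * a ^ 2 + 4 * η * (η + r) * f := Real.sq_sqrt (by positivity)
  set ρ := (r * a + S) / (2 * (η + r)) with hρ
  have hρ0 : 0 < ρ := by positivity
  have hηr : (0:ℝ) < η + r := by linarith
  have hquad : (η + r) * ρ ^ 2 = r * a * ρ + η * f := by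
    rw [hρ]
    field_simp
    nlinarith [hSsq]
  have habs : ‖(ρ : ℂ) * (w / (a : ℂ))‖ = ρ := by
    rw [norm_mul, norm_div, Complex.norm_real, Complex.norm_real, Real.norm_eq_abs, Real.norm_eq_abs,
      abs_of_pos hρ0, abs_of_pos ha0, ← ha]
    field_simp
  have hdiff : ‖(ρ : ℂ) * (w / (a : ℂ)) - w‖ = |ρ - a| := by
    have h1 : (ρ : ℂ) * (w / (a : ℂ)) - w = (((ρ - a) / a : ℝ) : ℂ) * w := by
      have : (a : ℂ) ≠ 0 := by exact_mod_cast ha0.ne'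
      push_cast
      field_simp
    rw [h1, norm_mul, Complex.norm_real, Real.norm_eq_abs, ← ha, abs_div, abs_of_pos ha0]
    field_simp
  rw [habs, hdiff]
  clear_value ρ
  clear_value S
  clear hρ hS hSsq hS0
  set s := ‖z‖ with hs
  have hs0 : 0 < s := norm_pos_iff.mpr hz
  have hzw : |s - a| ≤ ‖z - w‖ :=
    abs_norm_sub_norm_le z w
  have hzw2 : (s - a) ^ 2 ≤ ‖z - w‖ ^ 2 := by
    calc (s - a) ^ 2 = |s - a| ^ 2 := (sq_abs _).symm
    _ ≤ ‖z - w‖ ^ 2 := by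
        apply pow_le_pow_left₀ (abs_nonneg _) hzw
  have hlog : Real.log s - Real.log ρ ≤ s / ρ - 1 := by
    have := Real.log_le_sub_one_of_pos (show 0 < s / ρ by positivity)
    rwa [Real.log_div hs0.ne' hρ0.ne'] at this
  have hlogρ : Real.log (ρ ^ 2) = 2 * Real.log ρ := by
    rw [Real.log_pow]; push_cast; ring
  have hlogs : Real.log (s ^ 2) = 2 * Real.log s := by
    rw [Real.log_pow]; push_cast; ring
  have habs2 : |ρ - a| ^ 2 = (ρ - a) ^ 2 := sq_abs _
  rw [hlogρ, hlogs, habs2]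
  have hkey : η * f * (Real.log s - Real.log ρ) ≤ ((η + r) * ρ - r * a) * (s - ρ) := by
    have h1 : η * f * (Real.log s - Real.log ρ) ≤ η * f * (s / ρ - 1) := by
      apply mul_le_mul_of_nonneg_left hlog (by positivity)
    have h2 : η * f * (s / ρ - 1) = ((η + r) * ρ - r * a) * (s - ρ) := by
      have : η * f = ((η + r) * ρ - r * a) * ρ := by nlinarith [hquad]
      rw [this]
      field_simp
    linarith [h1, h2.le]
  nlinarith [hzw2, hkey, sq_nonneg (s - ρ), mul_pos hη hρ0]
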